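/- Let J be the set of all finite sums of distinct powers 10^k with k ranging over an infinite set I ⊆ ℕ of integers ≥ n, let m, k, n ∈ ℕ with n, m, k ≥ 1, and suppose n₁ < … < n_s, m₁ < … < m_t, k₁ < … < k_u are positive integers with (10^{n₁}+…+10^{n_s}+n) + (10^{m₁}+…+10^{m_t}+m) = 10^{k₁}+…+10^{k_u}+k, where 1 ≤ n ≤ n₁, 1 ≤ m ≤ m₁, 1 ≤ k ≤ k₁, and {k₁,…,k_u} is disjoint from {n₁,…,n_s} ∪ {m₁,…,m_t}, with all of s,t,u ≥ 1. Then a contradiction follows; i.e., no such equality can hold. -/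

import Mathlib

lemma geom9 (N : ℕ) : 9 * (∑ j ∈ Finset.range N, 10 ^ j) + 1 = 10 ^ N := by
  induction N with
  | zero => simp
  | succ n ih => rw [Finset.sum_range_succ, pow_succ]; omega

lemma sum_pow_le {s : ℕ} (a : Fin s → ℕ) (ha : StrictMono a) (M : ℕ)
    (h : ∀ i, a i ≤ M) :
    (∑ i, 10 ^ a i) ≤ ∑ j ∈ Finset.range (M + 1), 10 ^ j := by
  calc (∑ i, 10 ^ a i) = ∑ j ∈ Finset.univ.image a, 10 ^ j := by
        rw [Finset.sum_image (fun i _ j _ hij => ha.injective hij)]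
    _ ≤ ∑ j ∈ Finset.range (M + 1), 10 ^ j := by
        apply Finset.sum_le_sum_of_subset
        intro x hx
        simp only [Finset.mem_image, Finset.mem_univ, true_and] at hx
        obtain ⟨i, rfl⟩ := hx
        exact Finset.mem_range.mpr (Nat.lt_succ_of_le (h i))

lemma pow_le_sum_pow {s : ℕ} (a : Fin s → ℕ) (i : Fin s) :
    10 ^ a i ≤ ∑ j, 10 ^ a j :=
  Finset.single_le_sum (f := fun j => 10 ^ a j) (fun j _ => Nat.zero_le _) (Finset.mem_univ i)

theorem stmt17 (s t u : ℕ) (hs : 0 < s) (ht : 0 < t) (hu : 0 < u)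
    (a : Fin s → ℕ) (b : Fin t → ℕ) (c : Fin u → ℕ)
    (ha : StrictMono a) (hb : StrictMono b) (hc : StrictMono c)
    (ha1 : 1 ≤ a ⟨0, hs⟩) (hb1 : 1 ≤ b ⟨0, ht⟩) (hc1 : 1 ≤ c ⟨0, hu⟩)
    (n m k : ℕ)
    (hn : 1 ≤ n) (hm : 1 ≤ m) (hk : 1 ≤ k)
    (hna : n ≤ a ⟨0, hs⟩) (hmb : m ≤ b ⟨0, ht⟩) (hkc : k ≤ c ⟨0, hu⟩)
    (hdisj1 : ∀ (i : Fin u) (j : Fin s), c i ≠ a j)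
    (hdisj2 : ∀ (i : Fin u) (j : Fin t), c i ≠ b j)
    (heq : ((∑ i, 10 ^ a i) + n) + ((∑ i, 10 ^ b i) + m) = (∑ i, 10 ^ c i) + k) :
    False := by
  have hlast : ∀ (v : ℕ) (hv : 0 < v) (f : Fin v → ℕ), StrictMono f →
      ∃ i : Fin v, ∀ j, f j ≤ f i := by
    intro v hv f hf
    refine ⟨⟨v - 1, by omega⟩, fun j => hf.monotone ?_⟩
    rw [Fin.le_def]
    have := j.isLt
    simp only []
    omega
  obtain ⟨isa, haA'⟩ := hlast s hs a ha
  obtain ⟨isb, hbB'⟩ := hlast t ht b hb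
  obtain ⟨isc, hcC'⟩ := hlast u hu c hc
  set A := a isa with hA
  set B := b isb with hB
  set C := c isc with hC
  have haA : ∀ i, a i ≤ A := haA'
  have hbB : ∀ i, b i ≤ B := hbB'
  have hcC : ∀ i, c i ≤ C := hcC'
  have hnA : n ≤ A := le_trans hna (haA ⟨0, hs⟩)
  have hmB : m ≤ B := le_trans hmb (hbB ⟨0, ht⟩)
  have hkC : k ≤ C := le_trans hkc (hcC ⟨0, hu⟩)
  have hCA : C ≠ A := hdisj1 isc isa
  have hCB : C ≠ B := hdisj2 isc isb
  rcases lt_or_gt_of_ne hCA with h1 | h1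
  · -- C < A : left side is too big. Not exactly; we need C < max A B giving LHS ≥ 10^{max},
    have hSC : (∑ i, 10 ^ c i) ≤ ∑ j ∈ Finset.range (C + 1), 10 ^ j :=
      sum_pow_le c hc C hcC
    have hg : 9 * (∑ j ∈ Finset.range (C + 1), 10 ^ j) + 1 = 10 ^ (C + 1) := geom9 _
    have hSA : 10 ^ A ≤ ∑ i, 10 ^ a i := pow_le_sum_pow a isa
    have hkQ : k < 10 ^ C := lt_of_le_of_lt hkC (Nat.lt_pow_self (by norm_num) : C < 10 ^ C)
    have hCp : 10 ^ (C + 1) ≤ 10 ^ A := Nat.pow_le_pow_right (by norm_num) (by omega)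
    have hPQ : 10 ^ C * 10 = 10 ^ (C + 1) := by rw [pow_succ]
    omega
  · -- A < C
    rcases lt_or_gt_of_ne hCB with h2 | h2
    · -- C < B
      have hSC : (∑ i, 10 ^ c i) ≤ ∑ j ∈ Finset.range (C + 1), 10 ^ j :=
        sum_pow_le c hc C hcC
      have hg : 9 * (∑ j ∈ Finset.range (C + 1), 10 ^ j) + 1 = 10 ^ (C + 1) := geom9 _
      have hSB : 10 ^ B ≤ ∑ i, 10 ^ b i := pow_le_sum_pow b isb
      have hkQ : k < 10 ^ C := lt_of_le_of_lt hkC (Nat.lt_pow_self (by norm_num) : C < 10 ^ C)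
      have hCp : 10 ^ (C + 1) ≤ 10 ^ B := Nat.pow_le_pow_right (by norm_num) (by omega)
      have hPQ : 10 ^ C * 10 = 10 ^ (C + 1) := by rw [pow_succ]
      omega
    · -- A < C and B < C : left side too small
      have hC1 : 1 ≤ C := le_trans hc1 (hcC ⟨0, hu⟩)
      have hSA : (∑ i, 10 ^ a i) ≤ ∑ j ∈ Finset.range C, 10 ^ j := by
        have := sum_pow_le a ha (C - 1) (fun i => by have := haA i; omega)
        have hE : C - 1 + 1 = C := by omega
        rwa [hE] at this
      have hSB : (∑ i, 10 ^ b i) ≤ ∑ j ∈ Finset.range C, 10 ^ j := by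
        have := sum_pow_le b hb (C - 1) (fun i => by have := hbB i; omega)
        have hE : C - 1 + 1 = C := by omega
        rwa [hE] at this
      have hg : 9 * (∑ j ∈ Finset.range C, 10 ^ j) + 1 = 10 ^ C := geom9 _
      have hSC : 10 ^ C ≤ ∑ i, 10 ^ c i := pow_le_sum_pow c isc
      have hnP : n < 10 ^ (C - 1) := by
        have h3 : A < 10 ^ A := Nat.lt_pow_self (by norm_num)
        have h4 : 10 ^ A ≤ 10 ^ (C - 1) := Nat.pow_le_pow_right (by norm_num) (by omega)
        omega
      have hmP : m < 10 ^ (C - 1) := by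
        have h3 : B < 10 ^ B := Nat.lt_pow_self (by norm_num)
        have h4 : 10 ^ B ≤ 10 ^ (C - 1) := Nat.pow_le_pow_right (by norm_num) (by omega)
        omega
      have hPQ : 10 ^ (C - 1) * 10 = 10 ^ C := by
        rw [← pow_succ]; congr 1; omega
      omega
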